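/- Let f : ℝⁿ → ℝ be convex and differentiable, T > 0, r ≤ 0, with f⋆ = inf f > −∞. Let X : [0,T) → ℝⁿ be C² solving 0 = Ẍ + (r/(t−T))Ẋ + 2∇f(X), X(0) = X₀, Ẋ(0) = 0. Then the function Ψ(t) = (1/2)‖Ẋ(t)‖² + 2( f(X(t)) − f(X₀) ) is nonincreasing on [0,T), Ψ(t) ≤ 0 for all t, and consequently sup_{t∈[0,T)} ‖Ẋ(t)‖ ≤ 2√(f(X₀) − f⋆). -/

import Mathlib

open Filter MeasureTheory
open scoped RealInnerProductSpace Topology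

theorem ogmg_ode_velocity_bounded
    {E : Type*} [NormedAddCommGroup E] [InnerProductSpace ℝ E] [CompleteSpace E]
    (f : E → ℝ) (g : E → E)
    (hgrad : ∀ x, HasGradientAt f (g x) x)
    (hconv : ∀ x y, 0 ≤ f x - f y - ⟪g y, x - y⟫)
    (fstar : ℝ) (hfstar : ∀ x, fstar ≤ f x)
    (T : ℝ) (hT : 0 < T) (r : ℝ) (hr : r ≤ 0)
    (X X' X'' : ℝ → E)
    (hX' : ∀ t ∈ Set.Ico (0:ℝ) T, HasDerivAt X (X' t) t)
    (hX'' : ∀ t ∈ Set.Ico (0:ℝ) T, HasDerivAt X' (X'' t) t)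
    (hODE : ∀ t ∈ Set.Ico (0:ℝ) T,
      X'' t + (r / (t - T)) • X' t + (2:ℝ) • g (X t) = 0)
    (X₀ : E) (hX0 : X 0 = X₀) (hXd0 : X' 0 = 0) :
    AntitoneOn (fun t => (1 / 2) * ‖X' t‖ ^ 2 + 2 * (f (X t) - f X₀))
        (Set.Ico 0 T)
      ∧ (∀ t ∈ Set.Ico (0:ℝ) T,
          (1 / 2) * ‖X' t‖ ^ 2 + 2 * (f (X t) - f X₀) ≤ 0)
      ∧ (∀ t ∈ Set.Ico (0:ℝ) T,
          ‖X' t‖ ≤ 2 * Real.sqrt (f X₀ - fstar)) := by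
  set Ψ : ℝ → ℝ := fun t => (1 / 2) * ‖X' t‖ ^ 2 + 2 * (f (X t) - f X₀) with hΨdef
  have hΨderiv : ∀ t ∈ Set.Ico (0:ℝ) T,
      HasDerivAt Ψ (-(r / (t - T)) * ‖X' t‖ ^ 2) t := by
    intro t ht
    have h1 : HasDerivAt (fun s => ⟪X' s, X' s⟫) (2 * ⟪X'' t, X' t⟫) t := by
      have := (hX'' t ht).inner ℝ (hX'' t ht)
      have heq : ⟪X' t, X'' t⟫ + ⟪X'' t, X' t⟫ = 2 * ⟪X'' t, X' t⟫ := by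
        rw [real_inner_comm (X' t) (X'' t)]; ring
      rwa [heq] at this
    have h2 : HasDerivAt (fun s => f (X s)) ⟪g (X t), X' t⟫ t := by
      have := (hgrad (X t)).hasFDerivAt.comp_hasDerivAt t (hX' t ht)
      simp at this
      exact this
    have h3 : HasDerivAt Ψ
        ((1/2) * (2 * ⟪X'' t, X' t⟫) + 2 * ⟪g (X t), X' t⟫) t := by
      have hfun : Ψ = fun s => (1/2) * ⟪X' s, X' s⟫ + 2 * (f (X s) - f X₀) := by
        funext s
        simp [hΨdef, real_inner_self_eq_norm_sq]
      rw [hfun]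
      have h := ((h1.const_mul (1/2 : ℝ)).add
        (((h2.sub_const (f X₀))).const_mul (2:ℝ)))
      simp at h ⊢
      exact h
    convert h3 using 1
    have hode := hODE t ht
    have hXX : X'' t = -((r / (t - T)) • X' t) - (2:ℝ) • g (X t) := by
      have := hode
      abel_nf at this ⊢
      linear_combination (norm := module) this
    rw [hXX]
    simp only [inner_sub_left, inner_neg_left, inner_smul_left, real_inner_self_eq_norm_sq,
      RCLike.ofReal_real_eq_id, id_eq, conj_trivial]
    ring
  have hcont : ContinuousOn Ψ (Set.Ico 0 T) := fun t ht =>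
    ((hΨderiv t ht).continuousAt).continuousWithinAt
  have hanti : AntitoneOn Ψ (Set.Ico 0 T) := by
    apply antitoneOn_of_deriv_nonpos (convex_Ico 0 T) hcont
    · intro t ht
      rw [interior_Ico] at ht
      have ht' : t ∈ Set.Ico (0:ℝ) T := ⟨le_of_lt ht.1, ht.2⟩
      exact ((hΨderiv t ht').differentiableAt.differentiableWithinAt)
    intro t ht
    rw [interior_Ico] at ht
    have ht' : t ∈ Set.Ico (0:ℝ) T := ⟨le_of_lt ht.1, ht.2⟩
    rw [(hΨderiv t ht').deriv]
    have h1 : 0 ≤ r / (t - T) := by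
      exact div_nonneg_iff.mpr (Or.inr ⟨hr, by linarith [ht.2]⟩)
    have h2 : (0:ℝ) ≤ ‖X' t‖ ^ 2 := sq_nonneg _
    nlinarith
  have hΨ0 : Ψ 0 = 0 := by simp [hΨdef, hXd0, hX0]
  have hle : ∀ t ∈ Set.Ico (0:ℝ) T, Ψ t ≤ 0 := by
    intro t ht
    have := hanti (Set.mem_Ico.mpr ⟨le_refl 0, hT⟩) ht ht.1
    rwa [hΨ0] at this
  refine ⟨hanti, hle, ?_⟩
  intro t ht
  have h1 := hle t ht
  have h2 := hfstar (X t)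
  have hsq : ‖X' t‖ ^ 2 ≤ 4 * (f X₀ - fstar) := by
    simp only [hΨdef] at h1
    nlinarith
  have hnn : (0:ℝ) ≤ f X₀ - fstar := by nlinarith [hfstar X₀]
  calc ‖X' t‖ = Real.sqrt (‖X' t‖ ^ 2) := by
        rw [Real.sqrt_sq (norm_nonneg _)]
    _ ≤ Real.sqrt (4 * (f X₀ - fstar)) := Real.sqrt_le_sqrt hsq
    _ = 2 * Real.sqrt (f X₀ - fstar) := by
        rw [show (4:ℝ) * (f X₀ - fstar) = 2^2 * (f X₀ - fstar) by ring,
          Real.sqrt_mul (by positivity), Real.sqrt_sq (by norm_num)]
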